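/- arXiv:2511.01793 — 4 statements merged into one kernel-verified Lean document; each statement's English description precedes it below -/
import Mathlib

section
/- For all vectors v and v' in ℂ^n, ‖v − R(v)‖₂ ≤ ‖v − R(v')‖₂. In words: replacing the phases in the revised exit wave by the phases computed from any other point v' can only increase the distance, so the quadratic surrogate built from the revised exit wave at the current iterate majorizes the exit-wave misfit. -/
lemma key_pointwise (z : ℂ) (s : ℝ) (hs : 0 ≤ s) (θ : ℝ) :
    ‖z - (s : ℂ) * Complex.exp ((z.arg : ℂ) * Complex.I)‖ ≤
      ‖z - (s : ℂ) * Complex.exp ((θ : ℂ) * Complex.I)‖ := by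
  have hz : (‖z‖ : ℂ) * Complex.exp ((z.arg : ℂ) * Complex.I) = z :=
    Complex.norm_mul_exp_arg_mul_I z
  have hfact : z - (s : ℂ) * Complex.exp ((z.arg : ℂ) * Complex.I) =
      ((‖z‖ - s : ℝ) : ℂ) * Complex.exp ((z.arg : ℂ) * Complex.I) := by
    push_cast
    rw [sub_mul, hz]
  have hL : ‖z - (s : ℂ) * Complex.exp ((z.arg : ℂ) * Complex.I)‖ =
      |‖z‖ - s| := by
    rw [hfact, norm_mul, Complex.norm_exp_ofReal_mul_I, mul_one, Complex.norm_real, Real.norm_eq_abs]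
  have hR' : |‖z‖ - s| ≤
      ‖z - (s : ℂ) * Complex.exp ((θ : ℂ) * Complex.I)‖ := by
    have := abs_norm_sub_norm_le z ((s : ℂ) * Complex.exp ((θ : ℂ) * Complex.I))
    have habs : ‖(s : ℂ) * Complex.exp ((θ : ℂ) * Complex.I)‖ = s := by
      rw [norm_mul,
        Complex.norm_exp_ofReal_mul_I, mul_one, Complex.norm_real, Real.norm_eq_abs, abs_of_nonneg hs]
    simpa [habs, abs_of_nonneg hs] using this
  rw [hL]; exact hR'

/-- Let `F` be a unitary map of `ℂ^n`, `d : Fin n → ℝ` entrywise nonnegative, and let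
`R(w) = F⁻¹ (fun r => √(d r) · exp(i · arg((F w) r)))` be the revised exit-wave map.
Then for all `v v'`, `‖v − R v‖ ≤ ‖v − R v'‖`. -/
theorem stmt1 (n : ℕ)
    (F : EuclideanSpace ℂ (Fin n) ≃ₗᵢ[ℂ] EuclideanSpace ℂ (Fin n))
    (d : Fin n → ℝ) (hd : ∀ r, 0 ≤ d r)
    (R : EuclideanSpace ℂ (Fin n) → EuclideanSpace ℂ (Fin n))
    (hR : ∀ w, R w = F.symm (WithLp.toLp 2 (fun r =>
      (Real.sqrt (d r) : ℂ) * Complex.exp (((F w r).arg : ℂ) * Complex.I))))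
    (v v' : EuclideanSpace ℂ (Fin n)) :
    ‖v - R v‖ ≤ ‖v - R v'‖ := by
  have hFR : ∀ w r, F (R w) r =
      (Real.sqrt (d r) : ℂ) * Complex.exp (((F w r).arg : ℂ) * Complex.I) := by
    intro w r
    rw [hR w, F.apply_symm_apply]
  have h1 : ∀ w, ‖v - R w‖ = ‖F v - F (R w)‖ := by
    intro w
    rw [← map_sub, F.norm_map]
  rw [h1 v, h1 v']
  rw [EuclideanSpace.norm_eq, EuclideanSpace.norm_eq]
  apply Real.sqrt_le_sqrt
  apply Finset.sum_le_sum
  intro r _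
  have hentry : ∀ w, (F v - F (R w)) r =
      F v r - (Real.sqrt (d r) : ℂ) * Complex.exp (((F w r).arg : ℂ) * Complex.I) := by
    intro w
    simp [hFR w r]
  rw [hentry v, hentry v']
  have := key_pointwise (F v r) (Real.sqrt (d r)) (Real.sqrt_nonneg _) ((F v' r).arg)
  exact pow_le_pow_left₀ (norm_nonneg _) (by simpa using this) 2
end

section
/- For every vector v in ℂ^n, ‖v − R(v)‖₂² = ∑_{r} ( |(F v)_r| − √(d_r) )². In words: the exit-wave misfit at v equals the Fourier-magnitude misfit against the measured amplitudes √d. -/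
/-- Let `F` be a unitary map of `ℂ^n`, `d : Fin n → ℝ` entrywise nonnegative, and let
`R(w) = F⁻¹ (fun r => √(d r) · exp(i · arg((F w) r)))` be the revised exit-wave map.
Then for every `v`, `‖v − R v‖² = ∑ r, (|(F v) r| − √(d r))²`. -/
theorem stmt2 (n : ℕ)
    (F : EuclideanSpace ℂ (Fin n) ≃ₗᵢ[ℂ] EuclideanSpace ℂ (Fin n))
    (d : Fin n → ℝ) (hd : ∀ r, 0 ≤ d r)
    (R : EuclideanSpace ℂ (Fin n) → EuclideanSpace ℂ (Fin n))
    (hR : ∀ w, R w = F.symm (WithLp.toLp 2 (fun r =>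
      (Real.sqrt (d r) : ℂ) * Complex.exp (((F w r).arg : ℂ) * Complex.I))))
    (v : EuclideanSpace ℂ (Fin n)) :
    ‖v - R v‖ ^ 2 = ∑ r, (‖F v r‖ - Real.sqrt (d r)) ^ 2 := by
  have h1 : ‖v - R v‖ = ‖F v - F (R v)‖ := by
    rw [← map_sub, F.norm_map]
  have h2 : F (R v) = fun r =>
      (Real.sqrt (d r) : ℂ) * Complex.exp (((F v r).arg : ℂ) * Complex.I) := by
    rw [hR]; exact congrArg WithLp.ofLp (F.apply_symm_apply _)
  rw [h1, EuclideanSpace.norm_eq, Real.sq_sqrt (by positivity)]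
  refine Finset.sum_congr rfl fun r _ => ?_
  have hz : (‖F v r‖ : ℂ) * Complex.exp (((F v r).arg : ℂ) * Complex.I)
      = F v r := Complex.norm_mul_exp_arg_mul_I _
  have hentry : (F v - F (R v)) r
      = ((‖F v r‖ - Real.sqrt (d r) : ℝ) : ℂ) *
        Complex.exp (((F v r).arg : ℂ) * Complex.I) := by
    have : (F v - F (R v)) r = F v r - F (R v) r := rfl
    rw [this, h2]
    simp only [Complex.ofReal_sub, sub_mul, hz]
  rw [hentry, norm_mul, Complex.norm_exp_ofReal_mul_I, mul_one, Complex.norm_real,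
    Real.norm_eq_abs, sq_abs]
end

section
/- Let w, X, Y ∈ ℂ satisfy Re((w − X)·conj(w − Y)) ≤ 0, and let d = X + t·(Y − X) for some real t (so d lies on the line through X and Y). Then |w − d| ≤ max( |X − d|, |Y − d| ). -/
lemma stmt7_aux (A P V2 t : ℝ) (hA : 0 ≤ A) (hV : 0 ≤ V2)
    (h1 : A ≤ (1 - 2*t)*P + t*(1-t)*V2) (hCS : P^2 ≤ A*V2) (ht : t ≤ 1/2) :
    A ≤ (1-t)^2 * V2 := by
  by_contra hc
  push_neg at hc
  have ht2 : (0:ℝ) ≤ 1 - 2*t := by linarith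
  have hVt : 0 ≤ (1-t)*(1-2*t)*V2 := mul_nonneg (mul_nonneg (by linarith) ht2) hV
  have hD : 0 < A - t*(1-t)*V2 := by nlinarith
  have hP : A - t*(1-t)*V2 ≤ (1-2*t)*P := by linarith
  have hsq : (A - t*(1-t)*V2)^2 ≤ ((1-2*t)*P)^2 := by nlinarith
  have h3 : ((1-2*t)*P)^2 ≤ (1-2*t)^2*(A*V2) := by
    rw [mul_pow]; exact mul_le_mul_of_nonneg_left hCS (sq_nonneg _)
  have hfac : (A - t^2*V2)*(A - (1-t)^2*V2) ≤ 0 := by nlinarith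
  have h4 : t^2*V2 ≤ (1-t)^2*V2 := by nlinarith
  nlinarith [mul_pos (show 0 < A - t^2*V2 by linarith) (show 0 < A - (1-t)^2*V2 by linarith)]

/-- If `w` lies in the closed disk with diameter `[X, Y]` and `d = X + t·(Y − X)` lies on the
line through `X` and `Y`, then `|w − d| ≤ max(|X − d|, |Y − d|)`. -/
theorem stmt7 (w X Y : ℂ) (h : ((w - X) * (starRingEnd ℂ) (w - Y)).re ≤ 0)
    (t : ℝ) (d : ℂ) (hd : d = X + (t : ℂ) * (Y - X)) :
    ‖w - d‖ ≤ max ‖X - d‖ ‖Y - d‖ := by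
  subst hd
  set A := Complex.normSq (w - (X + (t:ℂ)*(Y-X))) with hAdef
  set P := ((w - (X + (t:ℂ)*(Y-X))) * (starRingEnd ℂ) (Y - X)).re with hPdef
  set V2 := Complex.normSq (Y - X) with hVdef
  have hA : 0 ≤ A := Complex.normSq_nonneg _
  have hV : 0 ≤ V2 := Complex.normSq_nonneg _
  have key : A - (1 - 2*t)*P - t*(1-t)*V2 = ((w - X) * (starRingEnd ℂ) (w - Y)).re := by
    simp only [hAdef, hPdef, hVdef, Complex.normSq_apply, Complex.mul_re, Complex.sub_re,
      Complex.sub_im, Complex.conj_re, Complex.conj_im, Complex.add_re, Complex.add_im,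
      Complex.mul_im, Complex.ofReal_re, Complex.ofReal_im]
    ring
  have h1 : A ≤ (1 - 2*t)*P + t*(1-t)*V2 := by linarith
  have hCS : P^2 ≤ A*V2 := by
    simp only [hAdef, hPdef, hVdef, Complex.normSq_apply, Complex.mul_re, Complex.sub_re,
      Complex.sub_im, Complex.conj_re, Complex.conj_im, Complex.add_re, Complex.add_im,
      Complex.mul_im, Complex.ofReal_re, Complex.ofReal_im]
    nlinarith [sq_nonneg ((w.re - (X.re + t*(Y.re-X.re)))*(Y.im - X.im)
      - (w.im - (X.im + t*(Y.im-X.im)))*(Y.re - X.re))]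
  rcases le_total t (1/2) with ht | ht
  · refine le_trans ?_ (le_max_right _ _)
    rw [Complex.norm_def, Complex.norm_def]
    apply Real.sqrt_le_sqrt
    have h2 : A ≤ (1-t)^2 * V2 := stmt7_aux A P V2 t hA hV h1 hCS ht
    have h3 : Complex.normSq (Y - (X + (t:ℂ)*(Y-X))) = (1-t)^2 * V2 := by
      simp only [hVdef, Complex.normSq_apply, Complex.sub_re, Complex.sub_im, Complex.add_re,
        Complex.add_im, Complex.mul_re, Complex.mul_im, Complex.ofReal_re, Complex.ofReal_im]
      ring
    rw [h3]; exact h2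
  · refine le_trans ?_ (le_max_left _ _)
    rw [Complex.norm_def, Complex.norm_def]
    apply Real.sqrt_le_sqrt
    have h1' : A ≤ (1 - 2*(1-t))*(-P) + (1-t)*(1-(1-t))*V2 := by linarith
    have hCS' : (-P)^2 ≤ A*V2 := by rw [neg_pow]; simpa using hCS
    have h2 : A ≤ (1-(1-t))^2 * V2 := stmt7_aux A (-P) V2 (1-t) hA hV h1' hCS' (by linarith)
    have h3 : Complex.normSq (X - (X + (t:ℂ)*(Y-X))) = (1-(1-t))^2 * V2 := by
      simp only [hVdef, Complex.normSq_apply, Complex.sub_re, Complex.sub_im, Complex.add_re,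
        Complex.add_im, Complex.mul_re, Complex.mul_im, Complex.ofReal_re, Complex.ofReal_im]
      ring
    rw [h3]; exact h2
end

section
/- Let d, e ∈ ℂ and let α, β be real numbers with 0 < α ≤ 1 and 0 < β ≤ 1. Set X = d + α·e and Y = d + β·e. Suppose w ∈ ℂ satisfies w² = X·Y, Re(w·conj(X)) ≥ 0, and Re(w·conj(Y)) ≥ 0. Then |w − d| ≤ max(α, β)·|e|. -/
open Complex

private lemma key_nonneg' {X1 X2 Y1 Y2 xy : ℝ} (h : xy^2 = (X1^2+X2^2)*(Y1^2+Y2^2))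
    (hxy0 : 0 ≤ xy) : 0 ≤ xy + (X1*Y1 + X2*Y2) := by
  nlinarith [sq_nonneg (X1*Y2 - X2*Y1), sq_nonneg (xy + (X1*Y1 + X2*Y2)), hxy0, h]

private lemma descend' {α β y c m t : ℝ} (hα : 0 < α) (hβ : 0 < β) (hlt : α < β)
    (hy : 0 ≤ y) (hc : 0 ≤ c) (hm : 0 ≤ m) (ht : (β-α)*t = m*(y+c)) :
    y*m - 2*β*t ≤ 0 := by
  nlinarith [ht, mul_nonneg hm hy, mul_nonneg hm hc, hα, hβ, sub_pos.mpr hlt]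

private lemma eq_of_sq_eq_sq' {s t : ℝ} (hs : 0 ≤ s) (ht : 0 ≤ t) (h : s^2 = t^2) : s = t := by
  rw [← Real.sqrt_sq hs, h, Real.sqrt_sq ht]

private lemma stmt11_aux (d e : ℂ) (α β : ℝ) (hα : 0 < α) (hβ : 0 < β) (hαβ : α ≤ β)
    (X Y w : ℂ) (hX : X = d + (α : ℂ) * e) (hY : Y = d + (β : ℂ) * e)
    (hw : w ^ 2 = X * Y)
    (h1 : 0 ≤ (w * (starRingEnd ℂ) X).re) (h2 : 0 ≤ (w * (starRingEnd ℂ) Y).re) :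
    ‖w - d‖ ≤ β * ‖e‖ := by
  subst hX hY
  rcases eq_or_lt_of_le hαβ with heq | hlt
  · -- α = β : X = Y, w = ±X
    subst heq
    have hXY : (w - (d + (α:ℂ)*e)) * (w + (d + (α:ℂ)*e)) = 0 := by linear_combination hw
    have hwX : w = d + (α:ℂ)*e := by
      rcases mul_eq_zero.mp hXY with h | h
      · exact sub_eq_zero.mp h
      · -- w = -X, alignment forces X = 0
        have hw' : w = -(d + (α:ℂ)*e) := eq_neg_of_add_eq_zero_left h
        rw [hw'] at h1
        have hns : ((-(d + (α:ℂ)*e)) * (starRingEnd ℂ) (d + (α:ℂ)*e)).re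
            = -Complex.normSq (d + (α:ℂ)*e) := by
          rw [neg_mul, Complex.mul_conj]
          simp
        rw [hns] at h1
        have h0 : Complex.normSq (d + (α:ℂ)*e) = 0 := le_antisymm (by linarith) (Complex.normSq_nonneg _)
        have hz : d + (α:ℂ)*e = 0 := Complex.normSq_eq_zero.mp h0
        rw [hw', hz]; ring
    rw [hwX]
    have : d + (α:ℂ)*e - d = (α:ℂ)*e := by ring
    rw [this, norm_mul, Complex.norm_real, Real.norm_eq_abs, abs_of_pos hα]
  · -- α < β
    have hre : ∀ z₁ z₂ : ℂ, (z₁ * (starRingEnd ℂ) z₂).re = z₁.re*z₂.re + z₁.im*z₂.im := by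
      intro z₁ z₂; simp [Complex.mul_re]
    have hXre : (d + (α:ℂ)*e).re = d.re + α*e.re := by simp
    have hXim : (d + (α:ℂ)*e).im = d.im + α*e.im := by simp
    have hYre : (d + (β:ℂ)*e).re = d.re + β*e.re := by simp
    have hYim : (d + (β:ℂ)*e).im = d.im + β*e.im := by simp
    have h1' : 0 ≤ w.re*(d.re+α*e.re) + w.im*(d.im+α*e.im) := by
      rw [hre, hXre, hXim] at h1; exact h1
    have h2' : 0 ≤ w.re*(d.re+β*e.re) + w.im*(d.im+β*e.im) := by
      rw [hre, hYre, hYim] at h2; exact h2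
    have hw1 : w.re^2 - w.im^2
        = (d.re+α*e.re)*(d.re+β*e.re) - (d.im+α*e.im)*(d.im+β*e.im) := by
      have h := congrArg Complex.re hw
      simp only [pow_two, Complex.mul_re, hXre, hXim, hYre, hYim] at h
      linear_combination h
    have hw2 : 2*(w.re*w.im)
        = (d.re+α*e.re)*(d.im+β*e.im) + (d.im+α*e.im)*(d.re+β*e.re) := by
      have h := congrArg Complex.im hw
      simp only [pow_two, Complex.mul_im, hXre, hXim, hYre, hYim] at h
      linear_combination h
    set x := ‖d + (α:ℂ)*e‖ with hxdef
    set y := ‖d + (β:ℂ)*e‖ with hydef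
    have hx0 : 0 ≤ x := norm_nonneg _
    have hy0 : 0 ≤ y := norm_nonneg _
    have hx2 : x^2 = (d.re+α*e.re)^2 + (d.im+α*e.im)^2 := by
      rw [hxdef, Complex.sq_norm, Complex.normSq_apply, hXre, hXim]; ring
    have hy2 : y^2 = (d.re+β*e.re)^2 + (d.im+β*e.im)^2 := by
      rw [hydef, Complex.sq_norm, Complex.normSq_apply, hYre, hYim]; ring
    have hxy : x*y = w.re^2 + w.im^2 := by
      have h := congrArg (‖·‖) hw
      rw [norm_pow, norm_mul] at h
      rw [← h, Complex.sq_norm, Complex.normSq_apply]; ring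
    have hE2 : (‖e‖)^2 = e.re^2 + e.im^2 := by
      rw [Complex.sq_norm, Complex.normSq_apply]; ring
    -- R := (d.re+α*e.re)*(d.re+β*e.re) + (d.im+α*e.im)*(d.im+β*e.im)
    have hx2y2 : (x*y)^2 = ((d.re+α*e.re)^2 + (d.im+α*e.im)^2)
        * ((d.re+β*e.re)^2 + (d.im+β*e.im)^2) := by rw [mul_pow, hx2, hy2]
    have hK : 0 ≤ x*y + ((d.re+α*e.re)*(d.re+β*e.re) + (d.im+α*e.im)*(d.im+β*e.im)) :=
      key_nonneg' hx2y2 (mul_nonneg hx0 hy0)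
    set c := Real.sqrt ((x*y + ((d.re+α*e.re)*(d.re+β*e.re) + (d.im+α*e.im)*(d.im+β*e.im)))/2)
      with hcdef
    have hc0 : 0 ≤ c := Real.sqrt_nonneg _
    have hc2 : c^2 = (x*y + ((d.re+α*e.re)*(d.re+β*e.re) + (d.im+α*e.im)*(d.im+β*e.im)))/2 := by
      rw [hcdef]; exact Real.sq_sqrt (by linarith)
    have hp2 : (w.re*(d.re+α*e.re) + w.im*(d.im+α*e.im))^2 = (x*c)^2 := by
      linear_combination (-(x^2))*hc2
        - ((x*y + ((d.re+α*e.re)*(d.re+β*e.re) + (d.im+α*e.im)*(d.im+β*e.im)))/2)*hx2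
        + (-((d.re+α*e.re)^2 + (d.im+α*e.im)^2)/2)*hxy
        + (((d.re+α*e.re)^2 - (d.im+α*e.im)^2)/2)*hw1
        + ((d.re+α*e.re)*(d.im+α*e.im))*hw2
    have hq2 : (w.re*(d.re+β*e.re) + w.im*(d.im+β*e.im))^2 = (y*c)^2 := by
      linear_combination (-(y^2))*hc2
        - ((x*y + ((d.re+α*e.re)*(d.re+β*e.re) + (d.im+α*e.im)*(d.im+β*e.im)))/2)*hy2
        + (-((d.re+β*e.re)^2 + (d.im+β*e.im)^2)/2)*hxy
        + (((d.re+β*e.re)^2 - (d.im+β*e.im)^2)/2)*hw1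
        + ((d.re+β*e.re)*(d.im+β*e.im))*hw2
    have hp : w.re*(d.re+α*e.re) + w.im*(d.im+α*e.im) = x*c :=
      eq_of_sq_eq_sq' h1' (mul_nonneg hx0 hc0) hp2
    have hq : w.re*(d.re+β*e.re) + w.im*(d.im+β*e.im) = y*c :=
      eq_of_sq_eq_sq' h2' (mul_nonneg hy0 hc0) hq2
    have hdiff : x^2 + y^2
        - 2*((d.re+α*e.re)*(d.re+β*e.re) + (d.im+α*e.im)*(d.im+β*e.im))
        = (β-α)^2*(e.re^2+e.im^2) := by linear_combination hx2 + hy2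
    have hm0 : 0 ≤ x + y - 2*c := by
      have harg : (x*y + ((d.re+α*e.re)*(d.re+β*e.re) + (d.im+α*e.im)*(d.im+β*e.im)))/2
          ≤ ((x+y)/2)^2 := by
        linarith [hdiff, sq_nonneg ((β-α)*e.re), sq_nonneg ((β-α)*e.im)]
      have hcle : c ≤ (x+y)/2 := by
        rw [hcdef]
        calc Real.sqrt _ ≤ Real.sqrt (((x+y)/2)^2) := Real.sqrt_le_sqrt harg
          _ = (x+y)/2 := Real.sqrt_sq (by linarith)
      linarith
    have key1 : (w.re-(d.re+β*e.re))^2 + (w.im-(d.im+β*e.im))^2 = y*(x+y-2*c) := by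
      linear_combination -hxy - hy2 - 2*hq
    have key2 : (β-α)*(((d.re+β*e.re)-w.re)*e.re + ((d.im+β*e.im)-w.im)*e.im)
        = (x+y-2*c)*(y+c) := by
      linear_combination -hy2 - hq + hp + 2*hc2
    have hδ : 0 < β - α := sub_pos.mpr hlt
    have hS' : y*(x+y-2*c)
        + 2*β*((w.re-(d.re+β*e.re))*e.re + (w.im-(d.im+β*e.im))*e.im) ≤ 0 := by
      have hd := descend' hα hβ hlt hy0 hc0 hm0 key2
      linarith [hd]
    have hfinal : (‖w - d‖)^2 ≤ (β * ‖e‖)^2 := by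
      have expand : (‖w - d‖)^2 = (w.re-d.re)^2 + (w.im-d.im)^2 := by
        rw [Complex.sq_norm, Complex.normSq_apply, Complex.sub_re, Complex.sub_im]; ring
      rw [expand, mul_pow, hE2]
      have hiden : (w.re-d.re)^2 + (w.im-d.im)^2
          = y*(x+y-2*c)
            + 2*β*((w.re-(d.re+β*e.re))*e.re + (w.im-(d.im+β*e.im))*e.im)
            + β^2*(e.re^2+e.im^2) := by linear_combination key1
      rw [hiden]
      linarith [hS']
    calc ‖w - d‖ = Real.sqrt ((‖w-d‖)^2) :=
          (Real.sqrt_sq (norm_nonneg _)).symm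
      _ ≤ Real.sqrt ((β * ‖e‖)^2) := Real.sqrt_le_sqrt hfinal
      _ = β * ‖e‖ := Real.sqrt_sq (mul_nonneg hβ.le (norm_nonneg _))


/-- Core geometric descent lemma: if `X = d + α·e`, `Y = d + β·e` with `0 < α, β ≤ 1`, and
`w` is a square root of `X·Y` phase-aligned with both `X` and `Y`, then
`|w − d| ≤ max(α, β)·|e|`. -/
theorem stmt11 (d e : ℂ) (α β : ℝ) (hα : 0 < α) (hα1 : α ≤ 1) (hβ : 0 < β) (hβ1 : β ≤ 1)
    (X Y w : ℂ) (hX : X = d + (α : ℂ) * e) (hY : Y = d + (β : ℂ) * e)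
    (hw : w ^ 2 = X * Y)
    (h1 : 0 ≤ (w * (starRingEnd ℂ) X).re) (h2 : 0 ≤ (w * (starRingEnd ℂ) Y).re) :
    ‖w - d‖ ≤ max α β * ‖e‖ := by
  rcases le_total α β with h | h
  · rw [max_eq_right h]
    exact stmt11_aux d e α β hα hβ h X Y w hX hY hw h1 h2
  · rw [max_eq_left h]
    exact stmt11_aux d e β α hβ hα h Y X w hY hX (by rw [hw]; ring) h2 h1
end
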